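/- Let (X,Z) be a random vector with copula C and continuous marginals F, G, i.e., P(X ≤ x, Z ≤ z) = C(F(x), G(z)). Suppose Z is integrable, left-skewed (1 - G(z) ≤ G(-z) for all z ≥ 0), and C(u,v) + C(u,1-v) ≥ u for all u,v ∈ [0,1]. Then E(Z | X ≤ x) ≤ 0 for all x with F(x) > 0. -/

import Mathlib

open MeasureTheory Set

/-- A (bivariate) copula: grounded, with uniform marginals, and 2-increasing. -/
structure IsCopula (C : ℝ → ℝ → ℝ) : Prop where
  grounded_fst : ∀ v ∈ Icc (0:ℝ) 1, C 0 v = 0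
  grounded_snd : ∀ u ∈ Icc (0:ℝ) 1, C u 0 = 0
  margin_fst : ∀ u ∈ Icc (0:ℝ) 1, C u 1 = u
  margin_snd : ∀ v ∈ Icc (0:ℝ) 1, C 1 v = v
  twoIncreasing : ∀ u₁ u₂ v₁ v₂ : ℝ, u₁ ∈ Icc (0:ℝ) 1 → u₂ ∈ Icc (0:ℝ) 1 →
    v₁ ∈ Icc (0:ℝ) 1 → v₂ ∈ Icc (0:ℝ) 1 → u₁ ≤ u₂ → v₁ ≤ v₂ →
    C u₁ v₂ + C u₂ v₁ ≤ C u₁ v₁ + C u₂ v₂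

/-- Conditional expectation of `Z` given an event `A`: `E(Z·1_A)/P(A)`. -/
noncomputable def condExpEvent {Ω : Type*} [MeasurableSpace Ω] (μ : Measure Ω)
    (Z : Ω → ℝ) (A : Set Ω) : ℝ := (∫ ω in A, Z ω ∂μ) / (μ A).toReal

/-- Monotonicity of a copula in its second argument. -/
lemma IsCopula.mono_snd {C : ℝ → ℝ → ℝ} (hC : IsCopula C) {u v₁ v₂ : ℝ}
    (hu : u ∈ Icc (0:ℝ) 1) (hv₁ : v₁ ∈ Icc (0:ℝ) 1) (hv₂ : v₂ ∈ Icc (0:ℝ) 1)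
    (h : v₁ ≤ v₂) : C u v₁ ≤ C u v₂ := by
  have h2 := hC.twoIncreasing 0 u v₁ v₂ ⟨le_refl 0, zero_le_one⟩ hu hv₁ hv₂ hu.1 h
  rw [hC.grounded_fst v₁ hv₁, hC.grounded_fst v₂ hv₂] at h2
  linarith

/-- If `(X,Z)` has copula `C` with continuous marginals `F`, `G`, `Z` is integrable
and left-skewed (`1 - G(z) ≤ G(-z)` for `z ≥ 0`), and `C(u,v) + C(u,1-v) ≥ u`,
then `E(Z | X ≤ x) ≤ 0` for all `x` with `F(x) > 0`. -/
theorem stmt15 {Ω : Type*} [MeasurableSpace Ω] (μ : Measure Ω) [IsProbabilityMeasure μ]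
    (X Z : Ω → ℝ) (hX : Measurable X) (hZmeas : Measurable Z)
    (hZint : Integrable Z μ)
    (C : ℝ → ℝ → ℝ) (hC : IsCopula C)
    (F G : ℝ → ℝ)
    (hF : ∀ x : ℝ, F x = (μ {ω | X ω ≤ x}).toReal)
    (hG : ∀ z : ℝ, G z = (μ {ω | Z ω ≤ z}).toReal)
    (hFcont : Continuous F) (hGcont : Continuous G)
    (hjoint : ∀ x z : ℝ, (μ {ω | X ω ≤ x ∧ Z ω ≤ z}).toReal = C (F x) (G z))
    (hskew : ∀ z : ℝ, 0 ≤ z → 1 - G z ≤ G (-z))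
    (hwPQD : ∀ u ∈ Icc (0:ℝ) 1, ∀ v ∈ Icc (0:ℝ) 1, u ≤ C u v + C u (1 - v)) :
    ∀ x : ℝ, 0 < F x → condExpEvent μ Z {ω | X ω ≤ x} ≤ 0 := by
  intro x hFx
  set A : Set Ω := {ω | X ω ≤ x} with hA
  have hmA : MeasurableSet A := hX measurableSet_Iic
  have hfin : ∀ s : Set Ω, μ s ≠ ⊤ := fun s => measure_ne_top μ s
  -- G takes values in [0,1]
  have hGmem : ∀ z : ℝ, G z ∈ Icc (0:ℝ) 1 := by
    intro z
    rw [hG z]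
    exact ⟨ENNReal.toReal_nonneg, by
      have := prob_le_one (μ := μ) (s := {ω | Z ω ≤ z})
      calc (μ {ω | Z ω ≤ z}).toReal ≤ (1 : ENNReal).toReal :=
            ENNReal.toReal_mono (by simp) this
        _ = 1 := by simp⟩
  have hFmem : F x ∈ Icc (0:ℝ) 1 := by
    rw [hF x]
    exact ⟨ENNReal.toReal_nonneg, by
      have := prob_le_one (μ := μ) (s := A)
      calc (μ A).toReal ≤ (1 : ENNReal).toReal := ENNReal.toReal_mono (by simp) this
        _ = 1 := by simp⟩
  -- no atoms for Z, from continuity of G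
  have noatom : ∀ c : ℝ, μ {ω | Z ω < c} = μ {ω | Z ω ≤ c} := by
    intro c
    refine le_antisymm (measure_mono fun ω h => show Z ω ≤ c from le_of_lt h) ?_
    rw [← ENNReal.toReal_le_toReal (hfin _) (hfin _)]
    have hc : (μ {ω | Z ω ≤ c}).toReal = G c := (hG c).symm
    rw [hc]
    have htend : Filter.Tendsto (fun n : ℕ => G (c - 1 / (n + 1))) Filter.atTop (nhds (G c)) := by
      have h1 : Filter.Tendsto (fun n : ℕ => c - 1 / ((n : ℝ) + 1)) Filter.atTop (nhds c) := by
        have := tendsto_one_div_add_atTop_nhds_zero_nat (𝕜 := ℝ)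
        have := (tendsto_const_nhds (x := c) (f := Filter.atTop (α := ℕ))).sub this
        simpa using this
      exact (hGcont.tendsto c).comp h1
    refine le_of_tendsto htend (Filter.Eventually.of_forall fun n => ?_)
    rw [hG]
    refine ENNReal.toReal_mono (hfin _) (measure_mono fun ω h => ?_)
    have : (0:ℝ) < 1 / ((n:ℝ) + 1) := by positivity
    simp only [mem_setOf_eq] at h ⊢
    linarith
  -- null difference between < and ≤
  have noatom' : ∀ c : ℝ, μ ({ω | Z ω ≤ c} \ {ω | Z ω < c}) = 0 := by
    intro c
    have hsub : {ω | Z ω < c} ⊆ {ω | Z ω ≤ c} := fun ω h => show Z ω ≤ c from le_of_lt h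
    rw [measure_diff hsub (hZmeas measurableSet_Iio).nullMeasurableSet (hfin _), ← noatom c,
      tsub_self]
  have inter_lt_eq : ∀ c : ℝ, μ (A ∩ {ω | Z ω < c}) = μ (A ∩ {ω | Z ω ≤ c}) := by
    intro c
    refine le_antisymm (measure_mono (inter_subset_inter_right _ fun ω h => show Z ω ≤ c from le_of_lt h)) ?_
    calc μ (A ∩ {ω | Z ω ≤ c})
        ≤ μ (A ∩ {ω | Z ω < c} ∪ ({ω | Z ω ≤ c} \ {ω | Z ω < c})) := by
          refine measure_mono fun ω ⟨hω1, hω2⟩ => ?_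
          by_cases h : Z ω < c
          · exact Or.inl ⟨hω1, h⟩
          · exact Or.inr ⟨hω2, h⟩
      _ ≤ μ (A ∩ {ω | Z ω < c}) + μ ({ω | Z ω ≤ c} \ {ω | Z ω < c}) := measure_union_le _ _
      _ = μ (A ∩ {ω | Z ω < c}) := by rw [noatom', add_zero]
  -- joint measure formulas
  have hjointA : ∀ c : ℝ, (μ (A ∩ {ω | Z ω ≤ c})).toReal = C (F x) (G c) := by
    intro c
    have : A ∩ {ω | Z ω ≤ c} = {ω | X ω ≤ x ∧ Z ω ≤ c} := by
      ext ω; simp [hA, mem_setOf_eq]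
    rw [this, hjoint x c]
  -- the key measure inequality
  have key : ∀ t : ℝ, 0 < t → μ (A ∩ {ω | t ≤ Z ω}) ≤ μ (A ∩ {ω | Z ω ≤ -t}) := by
    intro t ht
    rw [← ENNReal.toReal_le_toReal (hfin _) (hfin _)]
    -- compute left side
    have hsplit : μ (A ∩ {ω | Z ω < t}) + μ (A \ {ω | Z ω < t}) = μ A :=
      measure_inter_add_diff A (hZmeas measurableSet_Iio)
    have hdiff : A \ {ω | Z ω < t} = A ∩ {ω | t ≤ Z ω} := by
      ext ω; simp [mem_setOf_eq, not_lt]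
    rw [hdiff] at hsplit
    have hsplit' : (μ (A ∩ {ω | Z ω < t})).toReal + (μ (A ∩ {ω | t ≤ Z ω})).toReal
        = (μ A).toReal := by
      rw [← ENNReal.toReal_add (hfin _) (hfin _), hsplit]
    have hlt : (μ (A ∩ {ω | Z ω < t})).toReal = C (F x) (G t) := by
      rw [inter_lt_eq t, hjointA t]
    have hFA : (μ A).toReal = F x := (hF x).symm
    have hL : (μ (A ∩ {ω | t ≤ Z ω})).toReal = F x - C (F x) (G t) := by
      linarith [hsplit', hlt, hFA]
    have hR : (μ (A ∩ {ω | Z ω ≤ -t})).toReal = C (F x) (G (-t)) := hjointA (-t)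
    rw [hL, hR]
    -- real inequality via copula properties
    have hGt := hGmem t
    have hGmt := hGmem (-t)
    have h1mGt : 1 - G t ∈ Icc (0:ℝ) 1 := ⟨by linarith [hGt.2], by linarith [hGt.1]⟩
    have h1 := hwPQD (F x) hFmem (G t) hGt
    have h2 : C (F x) (1 - G t) ≤ C (F x) (G (-t)) :=
      hC.mono_snd hFmem h1mGt hGmt (hskew t ht.le)
    linarith
  -- positive and negative parts
  set ν := μ.restrict A with hν
  have hposint : ∫⁻ ω, ENNReal.ofReal (Z ω) ∂ν = ∫⁻ t in Ioi 0, ν {ω | t ≤ Z ω} := by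
    have hP : ∀ ω, ENNReal.ofReal (Z ω) = ENNReal.ofReal (max (Z ω) 0) := by
      intro ω
      rcases le_total (Z ω) 0 with h | h
      · rw [max_eq_right h, ENNReal.ofReal_zero, ENNReal.ofReal_eq_zero.2 h]
      · rw [max_eq_left h]
    have := lintegral_eq_lintegral_meas_le ν
      (Filter.Eventually.of_forall fun ω => le_max_right (Z ω) 0)
      (hZmeas.max measurable_const).aemeasurable
    simp_rw [hP]
    rw [this]
    refine setLIntegral_congr_fun measurableSet_Ioi (fun t ht => ?_)
    congr 1
    ext ω
    simp only [mem_setOf_eq, le_max_iff]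
    exact ⟨fun h => h.resolve_right (not_le.2 ht), Or.inl⟩
  have hnegint : ∫⁻ ω, ENNReal.ofReal (-Z ω) ∂ν = ∫⁻ t in Ioi 0, ν {ω | Z ω ≤ -t} := by
    have hP : ∀ ω, ENNReal.ofReal (-Z ω) = ENNReal.ofReal (max (-Z ω) 0) := by
      intro ω
      rcases le_total (-Z ω) 0 with h | h
      · rw [max_eq_right h, ENNReal.ofReal_zero, ENNReal.ofReal_eq_zero.2 h]
      · rw [max_eq_left h]
    have := lintegral_eq_lintegral_meas_le ν
      (Filter.Eventually.of_forall fun ω => le_max_right (-Z ω) 0)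
      (hZmeas.neg.max measurable_const).aemeasurable
    simp_rw [hP]
    rw [this]
    refine setLIntegral_congr_fun measurableSet_Ioi (fun t ht => ?_)
    congr 1
    ext ω
    simp only [mem_setOf_eq, le_max_iff]
    constructor
    · intro h
      have := h.resolve_right (not_le.2 ht)
      linarith
    · intro h; left; linarith
  -- compare the two lintegrals
  have hrestr : ∀ (s : Set Ω), MeasurableSet s → ν s = μ (s ∩ A) := by
    intro s hs; rw [hν, Measure.restrict_apply hs]
  have hcomp : ∫⁻ ω, ENNReal.ofReal (Z ω) ∂ν ≤ ∫⁻ ω, ENNReal.ofReal (-Z ω) ∂ν := by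
    rw [hposint, hnegint]
    have hanti : Antitone (fun t : ℝ => ν {ω | Z ω ≤ -t}) := by
      intro t₁ t₂ h
      exact measure_mono fun ω hω => show Z ω ≤ -t₁ from le_trans (show Z ω ≤ -t₂ from hω) (by linarith)
    refine setLIntegral_mono hanti.measurable fun t ht => ?_
    rw [hrestr {ω | t ≤ Z ω} (measurableSet_le measurable_const hZmeas),
      hrestr {ω | Z ω ≤ -t} (measurableSet_le hZmeas measurable_const),
      inter_comm, inter_comm {ω | Z ω ≤ -t}]
    exact key t ht
  -- finiteness of negative part
  have hnegfin : ∫⁻ ω, ENNReal.ofReal (-Z ω) ∂ν ≠ ⊤ := by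
    have hb : ∀ ω, ENNReal.ofReal (-Z ω) ≤ ‖Z ω‖₊ := by
      intro ω
      rw [← enorm_eq_nnnorm, ← ofReal_norm]
      exact ENNReal.ofReal_le_ofReal (by simpa using neg_le_abs (Z ω))
    have hint : Integrable Z ν := hZint.restrict
    have h2 : (∫⁻ ω, (‖Z ω‖₊ : ENNReal) ∂ν) < ⊤ := hint.2
    exact ne_top_of_le_ne_top h2.ne (lintegral_mono hb)
  -- conclude
  have hnum : (∫ ω in A, Z ω ∂μ) ≤ 0 := by
    have heq := integral_eq_lintegral_pos_part_sub_lintegral_neg_part (μ := ν)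
      (hZint.restrict (s := A))
    rw [show (∫ ω in A, Z ω ∂μ) = ∫ ω, Z ω ∂ν from rfl, heq]
    have h1 : (∫⁻ ω, ENNReal.ofReal (Z ω) ∂ν).toReal
        ≤ (∫⁻ ω, ENNReal.ofReal (-Z ω) ∂ν).toReal := ENNReal.toReal_mono hnegfin hcomp
    linarith
  unfold condExpEvent
  exact div_nonpos_iff.2 (Or.inr ⟨hnum, ENNReal.toReal_nonneg⟩)
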